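/- Let (T,L) be a TAP instance where T is a k-wide tree with root r, let K be the number of leaves of T that are different from r, and let x ∈ [0,1]^L satisfy ∑_{ℓ ∈ cov(e)} x_ℓ ≥ 1 for every edge e of T. Then 2·∑_{ℓ∈L} x_ℓ − ∑_{ℓ ∈ L_up} x_ℓ − ∑_{ℓ ∈ L_cross^{no-crit}} x_ℓ ≥ K, where L_up is the set of up-links and L_cross^{no-crit} is the set of cross-links having at least one endpoint of degree 2 in T. -/

import Mathlib

open scoped Classical

/-- `a` lies on the unique path in the tree `G` between the endpoints of the link `ℓ`. -/
def MemLinkPath {V : Type} (G : SimpleGraph V) (ℓ : Sym2 V) (a : V) : Prop :=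
  ∃ u v : V, ℓ = s(u, v) ∧ G.dist u a + G.dist a v = G.dist u v

/-- The edge set `P_ℓ` of the unique path in the tree `G` between the endpoints of `ℓ`. -/
def linkPath {V : Type} (G : SimpleGraph V) (ℓ : Sym2 V) : Set (Sym2 V) :=
  {e | e ∈ G.edgeSet ∧ ∀ a ∈ e, MemLinkPath G ℓ a}

/-- `v` belongs to the principal subtree of the tree `G` rooted at `r` associated with the
child `c` of `r`. -/
def MemPrincipal {V : Type} (G : SimpleGraph V) (r c v : V) : Prop :=
  v = r ∨ G.dist r c + G.dist c v = G.dist r v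

/-- Vertex set of the principal subtree of child `c`. -/
noncomputable def principalVerts {V : Type} [Fintype V] (G : SimpleGraph V) (r c : V) :
    Finset V :=
  Finset.univ.filter (fun v => MemPrincipal G r c v)

/-- The leaves (degree-1 vertices) of the principal subtree of child `c`. -/
noncomputable def principalLeaves {V : Type} [Fintype V] (G : SimpleGraph V) (r c : V) :
    Finset V :=
  (principalVerts G r c).filter
    (fun v => ((principalVerts G r c).filter (fun w => G.Adj v w)).card = 1)

/-- The tree `G` is `k`-wide with root `r`: every principal subtree has at most `k`
leaves. -/
def KWide {V : Type} [Fintype V] (G : SimpleGraph V) (r : V) (k : ℕ) : Prop :=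
  ∀ c : V, G.Adj r c → (principalLeaves G r c).card ≤ k

/-- `u` and `v` lie in a common principal subtree of the tree `G` rooted at `r`. -/
def SameSubtree {V : Type} (G : SimpleGraph V) (r u v : V) : Prop :=
  ∃ c : V, G.Adj r c ∧ MemPrincipal G r c u ∧ MemPrincipal G r c v

/-- `ℓ` is a cross-link with respect to the root `r`. -/
def IsCrossLink {V : Type} (G : SimpleGraph V) (r : V) (ℓ : Sym2 V) : Prop :=
  ∃ u v : V, ℓ = s(u, v) ∧ u ≠ r ∧ v ≠ r ∧ ¬ SameSubtree G r u v

/-- `ℓ` is an in-link with respect to the root `r`. -/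
def IsInLink {V : Type} (G : SimpleGraph V) (r : V) (ℓ : Sym2 V) : Prop :=
  ∃ u v : V, ℓ = s(u, v) ∧ SameSubtree G r u v

/-- `ℓ` is an up-link with respect to the root `r`: an in-link `{u,v}` such that `u` lies
on the path in `T` from `r` to `v`. -/
def IsUpLink {V : Type} (G : SimpleGraph V) (r : V) (ℓ : Sym2 V) : Prop :=
  IsInLink G r ℓ ∧ ∃ u v : V, ℓ = s(u, v) ∧ G.dist r u + G.dist u v = G.dist r v


/-- An interior vertex of a geodesic has degree at least 2. -/
lemma aux_interior {V : Type} [Fintype V] (G : SimpleGraph V) [DecidableRel G.Adj]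
    (hc : G.Connected) {u v w : V} (huv : u ≠ v) (hvw : v ≠ w)
    (h : G.dist u v + G.dist v w = G.dist u w) : 2 ≤ G.degree v := by
  obtain ⟨p, hp⟩ := hc.exists_walk_length_eq_dist u v
  obtain ⟨q, hq⟩ := hc.exists_walk_length_eq_dist v w
  obtain ⟨a, ha, p', hp'⟩ := p.reverse.exists_eq_cons_of_ne huv.symm
  obtain ⟨b, hb, q', hq'⟩ := q.exists_eq_cons_of_ne hvw
  have hpa : G.dist a u ≤ G.dist u v - 1 := by
    have : p.reverse.length = G.dist u v := by rw [SimpleGraph.Walk.length_reverse, hp]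
    rw [hp'] at this
    simp only [SimpleGraph.Walk.length_cons] at this
    calc G.dist a u ≤ p'.length := SimpleGraph.dist_le p'
    _ = G.dist u v - 1 := by omega
  have hqb : G.dist b w ≤ G.dist v w - 1 := by
    have : q.length = G.dist v w := hq
    rw [hq'] at this
    simp only [SimpleGraph.Walk.length_cons] at this
    calc G.dist b w ≤ q'.length := SimpleGraph.dist_le q'
    _ = G.dist v w - 1 := by omega
  have h1 : 1 ≤ G.dist u v := hc.pos_dist_of_ne huv
  have h2 : 1 ≤ G.dist v w := hc.pos_dist_of_ne hvw
  have hab : a ≠ b := by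
    rintro rfl
    have := hc.dist_triangle (u := u) (v := a) (w := w)
    have hd : G.dist u a = G.dist a u := SimpleGraph.dist_comm
    rw [hd] at this
    omega
  have hsub : ({a, b} : Finset V) ⊆ G.neighborFinset v := by
    intro z hz
    rw [SimpleGraph.mem_neighborFinset]
    rcases Finset.mem_insert.mp hz with rfl | hz
    · exact ha
    · rw [Finset.mem_singleton] at hz; subst hz; exact hb
  calc 2 = ({a, b} : Finset V).card := (Finset.card_pair hab).symm
  _ ≤ (G.neighborFinset v).card := Finset.card_le_card hsub
  _ = G.degree v := rfl

lemma aux_card_le_two {V : Type} [DecidableEq V] (S : Finset V) (u v : V) :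
    (S.filter (· ∈ s(u, v))).card ≤ 2 := by
  have hsub : S.filter (· ∈ s(u, v)) ⊆ {u, v} := by
    intro z hz
    rw [Finset.mem_filter, Sym2.mem_iff] at hz
    rcases hz.2 with rfl | rfl
    · exact Finset.mem_insert_self _ _
    · exact Finset.mem_insert_of_mem (Finset.mem_singleton_self _)
  calc (S.filter (· ∈ s(u, v))).card ≤ ({u, v} : Finset V).card := Finset.card_le_card hsub
  _ ≤ 2 := Finset.card_insert_le _ _ |>.trans (by simp)

lemma aux_card_le_one {V : Type} [DecidableEq V] (S : Finset V) (u v : V) (hu : u ∉ S) :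
    (S.filter (· ∈ s(u, v))).card ≤ 1 := by
  have hsub : S.filter (· ∈ s(u, v)) ⊆ {v} := by
    intro z hz
    rw [Finset.mem_filter, Sym2.mem_iff] at hz
    rcases hz.2 with rfl | rfl
    · exact absurd hz.1 hu
    · exact Finset.mem_singleton_self _
  calc (S.filter (· ∈ s(u, v))).card ≤ ({v} : Finset V).card := Finset.card_le_card hsub
  _ = 1 := Finset.card_singleton _

lemma aux_sameSubtree_symm {V : Type} (G : SimpleGraph V) (r u v : V)
    (h : SameSubtree G r u v) : SameSubtree G r v u := by
  obtain ⟨c, h1, h2, h3⟩ := h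
  exact ⟨c, h1, h3, h2⟩

lemma aux_not_both {V : Type} (G : SimpleGraph V) (r : V) (ℓ : Sym2 V)
    (hin : IsInLink G r ℓ) (hcr : IsCrossLink G r ℓ) : False := by
  obtain ⟨u, v, rfl, hs⟩ := hin
  obtain ⟨u', v', he, _, _, hns⟩ := hcr
  rw [Sym2.eq_iff] at he
  rcases he with ⟨rfl, rfl⟩ | ⟨rfl, rfl⟩
  · exact hns hs
  · exact hns (aux_sameSubtree_symm G r _ _ hs)

/-- Let `(T,L)` be a TAP instance on a `k`-wide tree with root `r`, let `K`
be the number of leaves of `T` different from `r`, and let `x ∈ [0,1]^L` fractionally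
cover every edge of `T`. Then `2·x(L) − x(L_up) − x(L_cross^{no-crit}) ≥ K`, where
`L_cross^{no-crit}` are the cross-links with an endpoint of degree 2 in `T`. -/
theorem stmt_14 {V : Type} [Fintype V] [DecidableEq V]
    (G : SimpleGraph V) [DecidableRel G.Adj] (hT : G.IsTree)
    (r : V) (k : ℕ) (hWide : KWide G r k)
    (L : Finset (Sym2 V)) (hLlinks : ∀ ℓ ∈ L, ¬ ℓ.IsDiag)
    (x : Sym2 V → ℝ) (hx : ∀ ℓ ∈ L, 0 ≤ x ℓ ∧ x ℓ ≤ 1)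
    (hCover : ∀ e ∈ G.edgeSet, 1 ≤ ∑ ℓ ∈ L.filter (fun ℓ => e ∈ linkPath G ℓ), x ℓ) :
    ((((Finset.univ : Finset V).filter (fun v => G.degree v = 1 ∧ v ≠ r)).card : ℝ)
      ≤ 2 * (∑ ℓ ∈ L, x ℓ)
        - (∑ ℓ ∈ L.filter (fun ℓ => IsUpLink G r ℓ), x ℓ)
        - (∑ ℓ ∈ L.filter (fun ℓ => IsCrossLink G r ℓ ∧ ∃ v ∈ ℓ, G.degree v = 2),
            x ℓ)) := by
    classical
  set Leaves : Finset V := Finset.univ.filter (fun v => G.degree v = 1 ∧ v ≠ r) with hLeaves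
  have hconn : G.Connected := hT.isConnected
  -- Step A: each leaf forces total x-weight at least 1 on links containing it
  have stepA : ∀ v ∈ Leaves, (1 : ℝ) ≤ ∑ ℓ ∈ L, (if v ∈ ℓ then x ℓ else 0) := by
    intro v hv
    rw [hLeaves, Finset.mem_filter] at hv
    obtain ⟨-, hdeg, hvr⟩ := hv
    have hpos : 0 < (G.neighborFinset v).card := by
      rw [SimpleGraph.card_neighborFinset_eq_degree, hdeg]; norm_num
    obtain ⟨w, hw⟩ := Finset.card_pos.mp hpos
    rw [SimpleGraph.mem_neighborFinset] at hw
    have he : s(v, w) ∈ G.edgeSet := G.mem_edgeSet.mpr hw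
    have hcov := hCover s(v, w) he
    calc (1 : ℝ) ≤ ∑ ℓ ∈ L.filter (fun ℓ => s(v, w) ∈ linkPath G ℓ), x ℓ := hcov
    _ = ∑ ℓ ∈ L, (if s(v, w) ∈ linkPath G ℓ then x ℓ else 0) := Finset.sum_filter _ _
    _ ≤ ∑ ℓ ∈ L, (if v ∈ ℓ then x ℓ else 0) := by
        refine Finset.sum_le_sum fun ℓ hℓ => ?_
        by_cases hp : s(v, w) ∈ linkPath G ℓ
        · have hvℓ : v ∈ ℓ := by
            obtain ⟨-, hall⟩ := hp
            obtain ⟨a, b, hab, hd⟩ := hall v (Sym2.mem_mk_left v w)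
            by_cases hva : v = a
            · subst hva; rw [hab]; exact Sym2.mem_mk_left _ _
            by_cases hvb : v = b
            · subst hvb; rw [hab]; exact Sym2.mem_mk_right _ _
            · exfalso
              have := aux_interior G hconn (Ne.symm hva) hvb hd
              omega
          rw [if_pos hp, if_pos hvℓ]
        · rw [if_neg hp]
          by_cases hv : v ∈ ℓ
          · rw [if_pos hv]; exact (hx ℓ hℓ).1
          · rw [if_neg hv]
  -- Step B: swap the double sum
  have hswap : ∑ v ∈ Leaves, ∑ ℓ ∈ L, (if v ∈ ℓ then x ℓ else 0)
      = ∑ ℓ ∈ L, ((Leaves.filter (· ∈ ℓ)).card : ℝ) * x ℓ := by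
    rw [Finset.sum_comm]
    refine Finset.sum_congr rfl fun ℓ _ => ?_
    rw [← Finset.sum_filter, Finset.sum_const, nsmul_eq_mul]
  -- Step C: per-link bound
  have stepC : ∀ ℓ ∈ L, ((Leaves.filter (· ∈ ℓ)).card : ℝ) * x ℓ
      ≤ (2 - (if IsUpLink G r ℓ then (1 : ℝ) else 0)
          - (if IsCrossLink G r ℓ ∧ ∃ v ∈ ℓ, G.degree v = 2 then (1 : ℝ) else 0)) * x ℓ := by
    intro ℓ hℓ
    have hx0 := (hx ℓ hℓ).1
    refine mul_le_mul_of_nonneg_right ?_ hx0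
    by_cases hup : IsUpLink G r ℓ
    · by_cases hcr : IsCrossLink G r ℓ ∧ ∃ v ∈ ℓ, G.degree v = 2
      · exact absurd (aux_not_both G r ℓ hup.1 hcr.1) (fun h => h)
      · simp only [hup, hcr, if_true, if_false]
        obtain ⟨-, u, v, hℓeq, hd⟩ := hup
        have hcard : (Leaves.filter (· ∈ ℓ)).card ≤ 1 := by
          rw [hℓeq]
          refine aux_card_le_one _ _ _ ?_
          rw [hLeaves, Finset.mem_filter]
          rintro ⟨-, hdeg, hur⟩
          have huv : u ≠ v := by
            have := hLlinks ℓ hℓ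
            rw [hℓeq] at this
            intro h; exact this (by rw [h]; exact Sym2.mk_isDiag_iff.mpr rfl)
          have := aux_interior G hconn (Ne.symm hur) huv hd
          omega
        calc ((Leaves.filter (· ∈ ℓ)).card : ℝ) ≤ 1 := by exact_mod_cast hcard
        _ = 2 - 1 - 0 := by norm_num
    · by_cases hcr : IsCrossLink G r ℓ ∧ ∃ v ∈ ℓ, G.degree v = 2
      · simp only [hup, hcr, if_true, if_false]
        obtain ⟨⟨u, v, hℓeq, -, -, -⟩, a, haℓ, hdeg2⟩ := hcr
        have hanot : a ∉ Leaves := by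
          rw [hLeaves, Finset.mem_filter]
          rintro ⟨-, hdeg, -⟩
          omega
        rw [hℓeq] at haℓ
        rw [Sym2.mem_iff] at haℓ
        have hcard : (Leaves.filter (· ∈ ℓ)).card ≤ 1 := by
          rcases haℓ with rfl | rfl
          · rw [hℓeq]; exact aux_card_le_one _ _ _ hanot
          · rw [hℓeq, Sym2.eq_swap]; exact aux_card_le_one _ _ _ hanot
        calc ((Leaves.filter (· ∈ ℓ)).card : ℝ) ≤ 1 := by exact_mod_cast hcard
        _ = 2 - 0 - 1 := by norm_num
      · simp only [hup, hcr, if_false]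
        obtain ⟨u, v, rfl⟩ : ∃ u v, ℓ = s(u, v) := Sym2.ind (fun u v => ⟨u, v, rfl⟩) ℓ
        have hcard := aux_card_le_two Leaves u v
        calc ((Leaves.filter (· ∈ s(u, v))).card : ℝ) ≤ 2 := by exact_mod_cast hcard
        _ = 2 - 0 - 0 := by norm_num
  calc ((Leaves.card : ℕ) : ℝ) = ∑ _v ∈ Leaves, (1 : ℝ) := by simp
  _ ≤ ∑ v ∈ Leaves, ∑ ℓ ∈ L, (if v ∈ ℓ then x ℓ else 0) := Finset.sum_le_sum stepA
  _ = ∑ ℓ ∈ L, ((Leaves.filter (· ∈ ℓ)).card : ℝ) * x ℓ := hswap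
  _ ≤ ∑ ℓ ∈ L, (2 - (if IsUpLink G r ℓ then (1 : ℝ) else 0)
        - (if IsCrossLink G r ℓ ∧ ∃ v ∈ ℓ, G.degree v = 2 then (1 : ℝ) else 0)) * x ℓ :=
      Finset.sum_le_sum stepC
  _ = 2 * (∑ ℓ ∈ L, x ℓ)
        - (∑ ℓ ∈ L.filter (fun ℓ => IsUpLink G r ℓ), x ℓ)
        - (∑ ℓ ∈ L.filter (fun ℓ => IsCrossLink G r ℓ ∧ ∃ v ∈ ℓ, G.degree v = 2), x ℓ) := by
      rw [Finset.sum_filter, Finset.sum_filter, Finset.mul_sum,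
        ← Finset.sum_sub_distrib, ← Finset.sum_sub_distrib]
      refine Finset.sum_congr rfl fun ℓ _ => ?_
      by_cases h1 : IsUpLink G r ℓ <;>
        by_cases h2 : IsCrossLink G r ℓ ∧ ∃ v ∈ ℓ, G.degree v = 2 <;>
        simp [h1, h2] <;> ring
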